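/- A minimal valid function π is a facet (for every minimal valid π', P(π) ⊆ P(π') implies π' = π) if and only if for every minimal valid function π', E(π) ⊆ E(π') implies π' = π. -/

import Mathlib

/-- Minimal valid function for the Gomory–Johnson infinite group problem with parameter `f`. -/
def MinimalValid (f : ℝ) (π : ℝ → ℝ) : Prop :=
  (∀ x, 0 ≤ π x) ∧ π 0 = 0 ∧ (∀ x y, π (x + y) ≤ π x + π y) ∧
  (∀ x, π (x + 1) = π x) ∧ (∀ x, π x + π (f - x) = 1)

/-- Additivity domain. -/
def Eset (π : ℝ → ℝ) : Set (ℝ × ℝ) := {p | π p.1 + π p.2 = π (p.1 + p.2)}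

/-- `P(π)`: finite-support ℤ₊-valued functions with ∑ r·y(r) ≡ f (mod 1) and ∑ π(r)·y(r) = 1. -/
def Pset (f : ℝ) (π : ℝ → ℝ) : Set (ℝ →₀ ℕ) :=
  {y | (∃ z : ℤ, (y.sum fun r n => r * (n : ℝ)) = f + z) ∧
       (y.sum fun r n => π r * (n : ℝ)) = 1}

/-- Valid function. -/
def ValidFn (f : ℝ) (π : ℝ → ℝ) : Prop :=
  (∀ x, 0 ≤ π x) ∧
  ∀ y : ℝ →₀ ℕ, (∃ z : ℤ, (y.sum fun r n => r * (n : ℝ)) = f + z) →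
    1 ≤ (y.sum fun r n => π r * (n : ℝ))

lemma per_int {π : ℝ → ℝ} (hper : ∀ x, π (x + 1) = π x) (x : ℝ) (z : ℤ) :
    π (x + z) = π x := by
  have hp : Function.Periodic π 1 := hper
  have := (hp.int_mul z) x
  simpa using this

lemma pi_f_eq_one {f : ℝ} {π : ℝ → ℝ} (hπ : MinimalValid f π) : π f = 1 := by
  have h := hπ.2.2.2.2 0
  rw [hπ.2.1] at h
  simpa using h

lemma subadd_multiset {f : ℝ} {π : ℝ → ℝ} (hπ : MinimalValid f π) (M : Multiset ℝ) :
    π M.sum ≤ (M.map π).sum := by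
  induction M using Multiset.induction_on with
  | empty => simp [hπ.2.1]
  | cons a s ih =>
      simp only [Multiset.sum_cons, Multiset.map_cons]
      calc π (a + s.sum) ≤ π a + π s.sum := hπ.2.2.1 a s.sum
        _ ≤ π a + (s.map π).sum := by linarith

lemma E_transfer {f : ℝ} {π π' : ℝ → ℝ} (hπ : MinimalValid f π) (hπ' : MinimalValid f π')
    (hE : Eset π ⊆ Eset π') (M : Multiset ℝ) (h : π M.sum = (M.map π).sum) :
    π' M.sum = (M.map π').sum := by
  induction M using Multiset.induction_on with
  | empty => simp [hπ'.2.1]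
  | cons a s ih =>
      simp only [Multiset.sum_cons, Multiset.map_cons] at h ⊢
      have h1 : π s.sum ≤ (s.map π).sum := subadd_multiset hπ s
      have h2 : π (a + s.sum) ≤ π a + π s.sum := hπ.2.2.1 a s.sum
      have he1 : π s.sum = (s.map π).sum := by linarith
      have he2 : π a + π s.sum = π (a + s.sum) := by linarith
      have hmem : (a, s.sum) ∈ Eset π := he2
      have hmem' := hE hmem
      have hadd' : π' a + π' s.sum = π' (a + s.sum) := hmem'
      rw [← hadd', ih he1]

lemma map_sum_eq (g : ℝ → ℝ) (y : ℝ →₀ ℕ) :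
    (y.toMultiset.map g).sum = y.sum fun r n => g r * (n : ℝ) := by
  induction y using Finsupp.induction with
  | zero => simp
  | single_add a n yy hna hn ih =>
      rw [Finsupp.toMultiset_add, Multiset.map_add, Multiset.sum_add, ih,
        Finsupp.sum_add_index' (by intro r; simp) (by intro r m1 m2; push_cast; ring),
        Finsupp.toMultiset_single, Finsupp.sum_single_index (by simp)]
      rw [Multiset.map_nsmul]
      simp [Multiset.sum_nsmul, nsmul_eq_mul, mul_comm]

lemma P_sub_of_E_sub {f : ℝ} {π π' : ℝ → ℝ} (hπ : MinimalValid f π) (hπ' : MinimalValid f π')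
    (hE : Eset π ⊆ Eset π') : Pset f π ⊆ Pset f π' := by
  rintro y ⟨⟨z, hz⟩, h1⟩
  have hMsum : y.toMultiset.sum = f + z := by
    have h := map_sum_eq id y
    simp only [id_eq, Multiset.map_id'] at h
    rw [h, hz]
  have hπM : π y.toMultiset.sum = (y.toMultiset.map π).sum := by
    rw [hMsum, per_int hπ.2.2.2.1 f z, pi_f_eq_one hπ, map_sum_eq, h1]
  have := E_transfer hπ hπ' hE y.toMultiset hπM
  refine ⟨⟨z, hz⟩, ?_⟩
  rw [← map_sum_eq, ← this, hMsum, per_int hπ'.2.2.2.1 f z, pi_f_eq_one hπ']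

lemma sum3 (c : ℝ → ℝ) (a b d : ℝ) :
    ((Finsupp.single a 1 + Finsupp.single b 1 + Finsupp.single d 1 : ℝ →₀ ℕ).sum
      fun r n => c r * (n : ℝ)) = c a + c b + c d := by
  rw [Finsupp.sum_add_index' (by intro r; simp) (by intro r m1 m2; push_cast; ring),
    Finsupp.sum_add_index' (by intro r; simp) (by intro r m1 m2; push_cast; ring),
    Finsupp.sum_single_index (by simp), Finsupp.sum_single_index (by simp),
    Finsupp.sum_single_index (by simp)]
  simp

lemma sum2 (c : ℝ → ℝ) (a b : ℝ) :
    ((Finsupp.single a 1 + Finsupp.single b 1 : ℝ →₀ ℕ).sum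
      fun r n => c r * (n : ℝ)) = c a + c b := by
  rw [Finsupp.sum_add_index' (by intro r; simp) (by intro r m1 m2; push_cast; ring),
    Finsupp.sum_single_index (by simp), Finsupp.sum_single_index (by simp)]
  simp

lemma E_sub_of_P_sub {f : ℝ} {π π' : ℝ → ℝ} (hπ : MinimalValid f π) (hπ' : MinimalValid f π')
    (hP : Pset f π ⊆ Pset f π') : Eset π ⊆ Eset π' := by
  rintro ⟨x, y⟩ hxy
  have hxy' : π x + π y = π (x + y) := hxy
  have hs : π (x + y) + π (f - (x + y)) = 1 := hπ.2.2.2.2 (x + y)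
  have hy1 : (Finsupp.single x 1 + Finsupp.single y 1 + Finsupp.single (f - (x + y)) 1 : ℝ →₀ ℕ)
      ∈ Pset f π := by
    constructor
    · refine ⟨0, ?_⟩
      have h := sum3 id x y (f - (x + y))
      simp only [id_eq] at h
      rw [h]; push_cast; ring
    · rw [sum3 π]; linarith
  have hy2 : (Finsupp.single (x + y) 1 + Finsupp.single (f - (x + y)) 1 : ℝ →₀ ℕ)
      ∈ Pset f π := by
    constructor
    · refine ⟨0, ?_⟩
      have h := sum2 id (x + y) (f - (x + y))
      simp only [id_eq] at h
      rw [h]; push_cast; ring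
    · rw [sum2 π]; linarith
  have h1 := (hP hy1).2
  have h2 := (hP hy2).2
  rw [sum3 π'] at h1
  rw [sum2 π'] at h2
  show π' x + π' y = π' (x + y)
  linarith

theorem facet_iff_E_characterization (f : ℝ) (hf : ∀ z : ℤ, f ≠ z)
    (π : ℝ → ℝ) (hπ : MinimalValid f π) :
    (∀ π' : ℝ → ℝ, MinimalValid f π' → Pset f π ⊆ Pset f π' → π' = π) ↔
    (∀ π' : ℝ → ℝ, MinimalValid f π' → Eset π ⊆ Eset π' → π' = π) := by
  constructor
  · intro h π' hπ' hE
    exact h π' hπ' (P_sub_of_E_sub hπ hπ' hE)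
  · intro h π' hπ' hP
    exact h π' hπ' (E_sub_of_P_sub hπ hπ' hP)
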